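/- Let n ≥ 2 be even. For each integer i with 2 ≤ i ≤ n, the number of words in U_n with exactly i runs equals 2·C(n/2 − 1, ⌈i/2⌉ − 1)·C(n/2 − 1, ⌊i/2⌋ − 1). Furthermore, for each integer i with 2 ≤ i ≤ n−1, the number of words in V_{n−1} with exactly i runs equals 2·[ C(n/2 − 1, ⌈i/2⌉ − 1)·C(n/2 − 2, ⌊i/2⌋ − 1) + C(n/2 − 1, ⌊i/2⌋ − 1)·C(n/2 − 2, ⌈i/2⌉ − 1) ]. -/

import Mathlib

namespace BRC

/-- Hamming distance between two binary words (of the same length). -/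
def hammingDist (x y : List Bool) : ℕ :=
  (List.zip x y).countP (fun p => p.1 != p.2)

/-- `balanced n` is the set `U_n` of binary words of length `n` with exactly `n/2` ones. -/
def balanced (n : ℕ) : Set (List Bool) :=
  {x | x.length = n ∧ x.count true = n / 2}

/-- `B^S(x)`: words obtained from `x` by at most one substitution. -/
def BS (x : List Bool) : Set (List Bool) :=
  {y | y.length = x.length ∧ hammingDist x y ≤ 1}

/-- `B^D(x)`: words obtained from `x` by deleting one symbol. -/
def BD (x : List Bool) : Set (List Bool) :=
  {y | ∃ (u v : List Bool) (b : Bool), x = u ++ b :: v ∧ y = u ++ v}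

/-- `B^I(x)`: words obtained from `x` by inserting one symbol. -/
def BI (x : List Bool) : Set (List Bool) :=
  {y | ∃ (u v : List Bool) (b : Bool), x = u ++ v ∧ y = u ++ b :: v}

def BDI (x : List Bool) : Set (List Bool) := BD x ∪ BI x
def BSD (x : List Bool) : Set (List Bool) := BS x ∪ BD x
def BSI (x : List Bool) : Set (List Bool) := BS x ∪ BI x
def Bedit (x : List Bool) : Set (List Bool) := BS x ∪ BD x ∪ BI x

/-- `C` is a balanced `(n,N;B)`-reconstruction code: `C ⊆ U_n` and `ν(C;B) < N`. -/
def reconCode (n N : ℕ) (B : List Bool → Set (List Bool)) (C : Set (List Bool)) : Prop :=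
  C ⊆ balanced n ∧ ∀ x ∈ C, ∀ y ∈ C, x ≠ y → (B x ∩ B y).ncard < N

/-- `ρ_b(n,N;B)`: optimal redundancy of a balanced `(n,N;B)`-reconstruction code. -/
noncomputable def rho (n N : ℕ) (B : List Bool → Set (List Bool)) : ℝ :=
  sInf {r : ℝ | ∃ C : Set (List Bool),
    reconCode n N B C ∧ r = (n : ℝ) - Real.logb 2 (C.ncard : ℝ)}

/-- `(10)^m`. -/
def pat10 (m : ℕ) : List Bool := (List.replicate m [true, false]).flatten
/-- `(01)^m`. -/
def pat01 (m : ℕ) : List Bool := (List.replicate m [false, true]).flatten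

/-- Type-A-confusable with parameter `m`: `{c, c'} = {(10)^m, (01)^m}`. -/
def TypeAWith (m : ℕ) (x y : List Bool) : Prop :=
  ∃ u v : List Bool,
    (x = u ++ pat10 m ++ v ∧ y = u ++ pat01 m ++ v) ∨
    (x = u ++ pat01 m ++ v ∧ y = u ++ pat10 m ++ v)

/-- Type-A-confusable (with some `m ≥ 1`). -/
def TypeA (x y : List Bool) : Prop := ∃ m, 1 ≤ m ∧ TypeAWith m x y

/-- Type-B-confusable with parameter `m`:
`{c, c'} = {0 1^m, 1^m 0}` or `{c, c'} = {1 0^m, 0^m 1}`. -/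
def TypeBWith (m : ℕ) (x y : List Bool) : Prop :=
  ∃ u v : List Bool,
    ((x = u ++ (false :: List.replicate m true) ++ v ∧
        y = u ++ (List.replicate m true ++ [false]) ++ v) ∨
     (x = u ++ (List.replicate m true ++ [false]) ++ v ∧
        y = u ++ (false :: List.replicate m true) ++ v)) ∨
    ((x = u ++ (true :: List.replicate m false) ++ v ∧
        y = u ++ (List.replicate m false ++ [true]) ++ v) ∨
     (x = u ++ (List.replicate m false ++ [true]) ++ v ∧
        y = u ++ (true :: List.replicate m false) ++ v))

/-- Type-B-confusable (with some `m ≥ 2`). -/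
def TypeB (x y : List Bool) : Prop := ∃ m, 2 ≤ m ∧ TypeBWith m x y

/-- Number of runs of a binary word. -/
def numRuns (x : List Bool) : ℕ := (x.destutter (· ≠ ·)).length

/-- `V_{n-1}`: binary words of length `n-1` with Hamming weight `n/2` or `n/2 - 1`. -/
def Vset (n : ℕ) : Set (List Bool) :=
  {x | x.length = n - 1 ∧ (x.count true = n / 2 ∨ x.count true = n / 2 - 1)}

/-- VT weighted sum `Σ_{i=1}^n i·x_i` (positions indexed from 1). -/
def vtSum (x : List Bool) : ℕ :=
  ((x.zipIdx.map Prod.swap).map (fun p => if p.2 then p.1 + 1 else 0)).sum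

/-- The balanced Varshamov–Tenengolts code `BVT_a(n)`. -/
def BVT (n a : ℕ) : Set (List Bool) :=
  {x | x ∈ balanced n ∧ vtSum x ≡ a [MOD n + 1]}

/-- `R_2^b(n,1,m)`: balanced words of length `n` all of whose runs have length at most `m`. -/
def R1 (n m : ℕ) : Set (List Bool) :=
  {x | x ∈ balanced n ∧ ∀ b : Bool, ¬ (List.replicate (m + 1) b <:+: x)}


def decode : Bool → List ℕ → List Bool
  | _, [] => []
  | b, a :: L => List.replicate a b ++ decode (!b) L

def interleave : List ℕ → List ℕ → List ℕ
  | [], B => B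
  | a :: A, B => a :: interleave B A
  termination_by A B => A.length + B.length
  decreasing_by simp; omega

mutual
def evens : List ℕ → List ℕ
  | [] => []
  | a :: l => a :: odds l
def odds : List ℕ → List ℕ
  | [] => []
  | _ :: l => evens l
end

@[simp] lemma decode_nil (b : Bool) : decode b [] = [] := rfl
@[simp] lemma decode_cons (b : Bool) (a : ℕ) (L : List ℕ) :
    decode b (a :: L) = List.replicate a b ++ decode (!b) L := rfl
@[simp] lemma interleave_nil (B : List ℕ) : interleave [] B = B := by simp [interleave]
@[simp] lemma interleave_cons (a : ℕ) (A B : List ℕ) :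
    interleave (a :: A) B = a :: interleave B A := by simp [interleave]

@[simp] lemma decode_length (b : Bool) (L : List ℕ) : (decode b L).length = L.sum := by
  induction L generalizing b with
  | nil => rfl
  | cons a L ih => simp [ih]

lemma interleave_length (A B : List ℕ) :
    (interleave A B).length = A.length + B.length := by
  induction A, B using interleave.induct with
  | case1 B => simp
  | case2 a A B ih => simp [ih]; omega

lemma interleave_sum (A B : List ℕ) : (interleave A B).sum = A.sum + B.sum := by
  induction A, B using interleave.induct with
  | case1 B => simp
  | case2 a A B ih => simp [ih]; omega

lemma mem_interleave {x : ℕ} {A B : List ℕ} (h : x ∈ interleave A B) : x ∈ A ∨ x ∈ B := by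
  induction A, B using interleave.induct with
  | case1 B => simp_all
  | case2 a A B ih =>
    simp only [interleave_cons, List.mem_cons] at h
    rcases h with h | h
    · simp [h]
    · rcases ih h with h | h <;> simp [h]

lemma evens_interleave (A B : List ℕ)
    (h : A.length = B.length ∨ A.length = B.length + 1) :
    evens (interleave A B) = A ∧ odds (interleave A B) = B := by
  induction A, B using interleave.induct with
  | case1 B =>
    have : B = [] := by
      cases B with
      | nil => rfl
      | cons b B => simp at h
    subst this; simp [evens, odds]
  | case2 a A B ih =>
    have hlen : B.length = A.length ∨ B.length = A.length + 1 := by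
      simp at h; omega
    obtain ⟨h1, h2⟩ := ih hlen
    simp [evens, odds, h1, h2]

lemma interleave_evens_odds (L : List ℕ) : interleave (evens L) (odds L) = L := by
  induction L with
  | nil => simp [evens, odds]
  | cons a l ih => simp [evens, odds, ih]

lemma evens_length (L : List ℕ) : (evens L).length = (L.length + 1) / 2 ∧
    (odds L).length = L.length / 2 := by
  induction L with
  | nil => simp [evens, odds]
  | cons a l ih => simp [evens, odds]; omega

lemma evens_sum (L : List ℕ) : (evens L).sum + (odds L).sum = L.sum := by
  induction L with
  | nil => simp [evens, odds]
  | cons a l ih => simp [evens, odds]; omega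

lemma mem_evens {x : ℕ} {L : List ℕ} : (x ∈ evens L → x ∈ L) ∧ (x ∈ odds L → x ∈ L) := by
  induction L with
  | nil => simp [evens, odds]
  | cons a l ih => simp [evens, odds]; tauto


lemma count_decode (A B : List ℕ) :
    ((A.length = B.length ∨ A.length = B.length + 1) →
      (decode true (interleave A B)).count true = A.sum) ∧
    ((A.length = B.length ∨ A.length = B.length + 1) →
      (decode false (interleave A B)).count true = B.sum) := by
  induction A, B using interleave.induct with
  | case1 B =>
    constructor <;> intro h <;>
    · have : B = [] := by cases B <;> simp_all
      subst this; simp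
  | case2 a A B ih =>
    have hlen : a :: A ≠ [] := by simp
    constructor <;> intro h <;> simp only [List.length_cons] at h
    · have := ih.2 (by omega)
      simp [List.count_append, this]
    · have := ih.1 (by omega)
      simp [List.count_append, this, List.count_replicate]

/-- destutter' skips copies of the pending element. -/
lemma destutter'_replicate_append (b : Bool) (k : ℕ) (t : List Bool) :
    List.destutter' (· ≠ ·) b (List.replicate k b ++ t) =
      List.destutter' (· ≠ ·) b t := by
  induction k with
  | zero => simp
  | succ k ih => simpa [List.replicate_succ, List.destutter'_cons] using ih

lemma destutter'_decode (L : List ℕ) (hpos : ∀ a ∈ L, 1 ≤ a) (b : Bool) :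
    (List.destutter' (· ≠ ·) b (decode (!b) L)).length = L.length + 1 := by
  induction L generalizing b with
  | nil => simp
  | cons a L ih =>
    have ha : 1 ≤ a := hpos a (by simp)
    obtain ⟨a', rfl⟩ : ∃ a', a = a' + 1 := ⟨a - 1, by omega⟩
    have hne : b ≠ !b := by cases b <;> simp
    simp only [decode_cons, List.replicate_succ, List.cons_append,
      List.destutter'_cons, if_pos hne, destutter'_replicate_append, Bool.not_not]
    have := ih (fun x hx => hpos x (by simp [hx])) (!b)
    rw [Bool.not_not] at this
    simp [this]

lemma numRuns_decode (b : Bool) (L : List ℕ) (hpos : ∀ a ∈ L, 1 ≤ a) :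
    numRuns (decode b L) = L.length := by
  cases L with
  | nil => simp [numRuns, List.destutter]
  | cons a L =>
    have ha : 1 ≤ a := hpos a (by simp)
    obtain ⟨a', rfl⟩ : ∃ a', a = a' + 1 := ⟨a - 1, by omega⟩
    simp only [numRuns, decode_cons, List.replicate_succ, List.cons_append,
      List.destutter_cons', destutter'_replicate_append]
    rw [destutter'_decode L (fun x hx => hpos x (by simp [hx])) b]
    simp

lemma decode_head (b : Bool) (a : ℕ) (L : List ℕ) (ha : 1 ≤ a) :
    (decode b (a :: L)).head? = some b := by
  obtain ⟨a', rfl⟩ : ∃ a', a = a' + 1 := ⟨a - 1, by omega⟩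
  simp [List.replicate_succ]


lemma replicate_append_head (b : Bool) {u v : List Bool} {a c : ℕ}
    (hu : u.head? ≠ some b) (hv : v.head? ≠ some b)
    (h : List.replicate a b ++ u = List.replicate c b ++ v) : a = c := by
  induction a generalizing c with
  | zero =>
    cases c with
    | zero => rfl
    | succ c =>
      simp only [List.replicate_zero, List.nil_append, List.replicate_succ,
        List.cons_append] at h
      rw [h] at hu; simp at hu
  | succ a ih =>
    cases c with
    | zero =>
      simp only [List.replicate_zero, List.nil_append, List.replicate_succ,
        List.cons_append] at h
      rw [← h] at hv; simp at hv
    | succ c =>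
      rw [List.replicate_succ, List.replicate_succ] at h
      simp only [List.cons_append, List.cons.injEq] at h
      exact congrArg (· + 1) (ih h.2)

lemma decode_head_ne (b : Bool) (L : List ℕ) (hpos : ∀ a ∈ L, 1 ≤ a) :
    (decode (!b) L).head? ≠ some b := by
  cases L with
  | nil => simp
  | cons a L =>
    rw [decode_head (!b) a L (hpos a (by simp))]
    cases b <;> simp

lemma decode_inj : ∀ (L M : List ℕ) (b : Bool), (∀ a ∈ L, 1 ≤ a) → (∀ a ∈ M, 1 ≤ a) →
    decode b L = decode b M → L = M := by
  intro L
  induction L with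
  | nil =>
    intro M b _ hM h
    cases M with
    | nil => rfl
    | cons c M =>
      exfalso
      have := congrArg List.length h
      simp at this
      have := hM c (by simp)
      omega
  | cons a L ih =>
    intro M b hL hM h
    cases M with
    | nil =>
      exfalso
      have := congrArg List.length h
      simp at this
      have := hL a (by simp)
      omega
    | cons c M =>
      simp only [decode_cons] at h
      have hac : a = c := replicate_append_head b
        (decode_head_ne b L (fun x hx => hL x (by simp [hx])))
        (decode_head_ne b M (fun x hx => hM x (by simp [hx]))) h
      subst hac
      have h2 : decode (!b) L = decode (!b) M := List.append_cancel_left h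
      rw [ih M (!b) (fun x hx => hL x (by simp [hx])) (fun x hx => hM x (by simp [hx])) h2]

/-- every nonempty word decodes uniquely; existence part -/
lemma exists_decode : ∀ (x : List Bool), x ≠ [] →
    ∃ b L, (∀ a ∈ L, 1 ≤ a) ∧ L ≠ [] ∧ x = decode b L ∧ x.head? = some b := by
  suffices H : ∀ n (x : List Bool), x.length = n → x ≠ [] →
      ∃ b L, (∀ a ∈ L, 1 ≤ a) ∧ L ≠ [] ∧ x = decode b L ∧ x.head? = some b by
    exact fun x hx => H x.length x rfl hx
  intro n
  induction n using Nat.strong_induction_on with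
  | _ n ih =>
    intro x hn hx
    subst hn
    cases x with
    | nil => simp at hx
    | cons b t =>
      set u := t.takeWhile (· == b) with hu
      set r := t.dropWhile (· == b) with hr
      have htur : t = u ++ r := (List.takeWhile_append_dropWhile ..).symm
      have hurep : u = List.replicate u.length b := by
        apply List.eq_replicate_of_mem
        intro x hx
        have := List.mem_takeWhile_imp hx
        simpa using this
      have hx1 : b :: t = List.replicate (u.length + 1) b ++ r := by
        rw [List.replicate_succ, List.cons_append, htur]
        congr 1
        rw [← hurep]
      by_cases hre : r = []
      · refine ⟨b, [u.length + 1], by simp, by simp, ?_, ?_⟩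
        · simp [hx1, hre]
        · simp
      · have hrlen : r.length < (b :: t).length := by
          have := (List.dropWhile_sublist (l := t) (· == b)).length_le
          rw [← hr] at this
          simp only [List.length_cons]
          omega
        obtain ⟨b', L', hpos', hne', hdec', hhead'⟩ := ih r.length hrlen r rfl hre
        have hb' : b' = !b := by
          have h1 := List.head_dropWhile_not (· == b) (l := t) (by rwa [← hr])
          have h4 : r.head? = some (r.head hre) := List.head?_eq_head _
          rw [hhead'] at h4
          have hb'' : r.head hre = b' := by injection h4.symm
          rw [hb''] at h1
          cases b <;> cases b' <;> first | rfl | simp at h1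
        refine ⟨b, (u.length + 1) :: L', ?_, by simp, ?_, by simp⟩
        · intro a ha
          rcases List.mem_cons.mp ha with h | h
          · omega
          · exact hpos' a h
        · rw [hx1, decode_cons, hdec', hb']


def compF : ℕ → ℕ → Finset (List ℕ)
  | m, 0 => if m = 0 then {[]} else ∅
  | m, (k+1) => (Finset.Icc 1 m).biUnion fun a => (compF (m-a) k).image (a :: ·)

lemma mem_compF {L : List ℕ} {m k : ℕ} :
    L ∈ compF m k ↔ L.length = k ∧ L.sum = m ∧ ∀ a ∈ L, 1 ≤ a := by
  induction k generalizing m L with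
  | zero =>
    simp only [compF]
    split
    · subst ‹m = 0›
      simp only [Finset.mem_singleton]
      constructor
      · rintro rfl; simp
      · rintro ⟨h1, _, _⟩
        exact List.eq_nil_of_length_eq_zero h1
    · simp only [Finset.notMem_empty, false_iff]
      rintro ⟨h1, h2, h3⟩
      have : L = [] := List.eq_nil_of_length_eq_zero h1
      subst this
      simp at h2
      omega
  | succ k ih =>
    simp only [compF, Finset.mem_biUnion, Finset.mem_image, Finset.mem_Icc]
    constructor
    · rintro ⟨a, ⟨ha1, ha2⟩, t, ht, rfl⟩
      obtain ⟨h1, h2, h3⟩ := ih.mp ht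
      refine ⟨by simp [h1], by simp [h2]; omega, ?_⟩
      intro x hx
      rcases List.mem_cons.mp hx with rfl | hx
      · exact ha1
      · exact h3 x hx
    · rintro ⟨h1, h2, h3⟩
      cases L with
      | nil => simp at h1
      | cons a t =>
        have ha : 1 ≤ a := h3 a (by simp)
        have hsum : a + t.sum = m := by simpa using h2
        refine ⟨a, ⟨ha, by omega⟩, t, ih.mpr ⟨by simpa using h1, by omega, ?_⟩, rfl⟩
        exact fun x hx => h3 x (by simp [hx])

lemma compF_zero_card (k : ℕ) (hk : 1 ≤ k) : (compF 0 k).card = 0 := by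
  rw [Finset.card_eq_zero, Finset.eq_empty_iff_forall_notMem]
  intro L hL
  obtain ⟨h1, h2, h3⟩ := mem_compF.mp hL
  cases L with
  | nil => simp at h1; omega
  | cons a t =>
    have := h3 a (by simp)
    simp at h2
    omega

lemma sum_range_choose' (N r : ℕ) : ∑ i ∈ Finset.range N, i.choose r = N.choose (r+1) := by
  induction N with
  | zero => simp
  | succ N ih => rw [Finset.sum_range_succ, ih, Nat.choose_succ_succ']; omega

lemma card_compF : ∀ k m, 1 ≤ m → 1 ≤ k → (compF m k).card = (m-1).choose (k-1) := by
  intro k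
  induction k with
  | zero => omega
  | succ k ih =>
    intro m hm _
    rcases Nat.eq_zero_or_pos k with rfl | hk
    · -- k = 0 : compF m 1 = {[m]}
      have : compF m 1 = {[m]} := by
        ext L
        rw [mem_compF, Finset.mem_singleton]
        constructor
        · rintro ⟨h1, h2, h3⟩
          cases L with
          | nil => simp at h1
          | cons a t =>
            have : t = [] := by simpa using h1
            subst this
            simp_all
        · rintro rfl; simp; omega
      simp [this]
    · -- inductive step
      have hrec : (compF m (k+1)).card = ∑ a ∈ Finset.Icc 1 m, (compF (m-a) k).card := by
        rw [show compF m (k+1) =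
          (Finset.Icc 1 m).biUnion (fun a => (compF (m-a) k).image (a :: ·)) from rfl]
        rw [Finset.card_biUnion]
        · congr 1
          ext a
          exact Finset.card_image_of_injective _ (fun x y h => by simpa using h)
        · intro x _ y _ hxy
          simp only [Finset.disjoint_left, Finset.mem_image]
          rintro L ⟨t, _, rfl⟩ ⟨t', _, h⟩
          simp at h
          exact hxy h.1.symm
      rw [hrec]
      have hterm : ∀ a ∈ Finset.Icc 1 m, (compF (m-a) k).card =
          if 1 ≤ m - a then (m-a-1).choose (k-1) else 0 := by
        intro a ha
        split
        · exact ih (m-a) ‹_› hk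
        · have : m - a = 0 := by omega
          rw [this]
          exact compF_zero_card k hk
      rw [Finset.sum_congr rfl hterm]
      have hstep1 : (∑ a ∈ Finset.Icc 1 m, if 1 ≤ m - a then (m-a-1).choose (k-1) else 0)
          = ∑ j ∈ Finset.range m, (if 1 ≤ j then (j-1).choose (k-1) else 0) := by
        apply Finset.sum_nbij' (i := fun a => m - a) (j := fun j => m - j)
        · intro a ha
          simp only [Finset.mem_Icc] at ha
          simp only [Finset.mem_range]
          omega
        · intro j hj
          simp only [Finset.mem_range] at hj
          simp only [Finset.mem_Icc]
          omega
        · intro a ha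
          simp only [Finset.mem_Icc] at ha
          omega
        · intro j hj
          simp only [Finset.mem_range] at hj
          omega
        · intro a ha
          rfl
      rw [hstep1]
      obtain ⟨m', rfl⟩ : ∃ m', m = m' + 1 := ⟨m - 1, by omega⟩
      rw [Finset.sum_range_succ']
      have hstep2 : ∀ i ∈ Finset.range m', (if 1 ≤ i + 1 then (i+1-1).choose (k-1) else 0) = i.choose (k-1) := by
        intro i _
        simp
      rw [Finset.sum_congr rfl hstep2, sum_range_choose',
        if_neg (by omega : ¬ (1:ℕ) ≤ 0)]
      have hk1 : k - 1 + 1 = k := by omega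
      rw [hk1]
      simp

lemma main_count (n w i : ℕ) (hw : 1 ≤ w) (hwn : w < n) (hi : 2 ≤ i) :
    ∃ F : Finset (List Bool),
      {x : List Bool | x.length = n ∧ x.count true = w ∧ numRuns x = i} = ↑F ∧
      F.card = (w-1).choose ((i+1)/2-1) * (n-w-1).choose (i/2-1) +
               (w-1).choose (i/2-1) * (n-w-1).choose ((i+1)/2-1) := by
  set k₁ := (i+1)/2 with hk₁
  set k₂ := i/2 with hk₂
  have hk₁pos : 1 ≤ k₁ := by omega
  have hk₂pos : 1 ≤ k₂ := by omega
  have hkk : k₁ = k₂ ∨ k₁ = k₂ + 1 := by omega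
  have hksum : k₁ + k₂ = i := by omega
  set F₁ : Finset (List Bool) :=
    ((compF w k₁) ×ˢ (compF (n-w) k₂)).image (fun p => decode true (interleave p.1 p.2))
    with hF₁
  set F₂ : Finset (List Bool) :=
    ((compF w k₂) ×ˢ (compF (n-w) k₁)).image (fun p => decode false (interleave p.2 p.1))
    with hF₂
  refine ⟨F₁ ∪ F₂, ?_, ?_⟩
  · ext x
    simp only [Set.mem_setOf_eq, Finset.coe_union, Set.mem_union, Finset.mem_coe, hF₁, hF₂,
      Finset.mem_image, Finset.mem_product, Prod.exists]
    constructor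
    · rintro ⟨hlen, hcnt, hruns⟩
      have hxne : x ≠ [] := by
        intro h; subst h; simp at hlen; omega
      obtain ⟨b, L, hpos, hLne, rfl, hhead⟩ := exists_decode x hxne
      have hLlen : L.length = i := by rw [← hruns, numRuns_decode b L hpos]
      have hLsum : L.sum = n := by rw [← hlen, decode_length]
      have hElen := evens_length L
      have hEsum := evens_sum L
      have hposE : ∀ a ∈ evens L, 1 ≤ a := fun a ha => hpos a (mem_evens.1 ha)
      have hposO : ∀ a ∈ odds L, 1 ≤ a := fun a ha => hpos a (mem_evens.2 ha)
      cases b with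
      | true =>
        left
        refine ⟨evens L, odds L, ⟨?_, ?_⟩, ?_⟩
        · rw [mem_compF]
          refine ⟨by omega, ?_, hposE⟩
          have := (count_decode (evens L) (odds L)).1 (by omega)
          rw [interleave_evens_odds] at this
          rw [this] at hcnt
          omega
        · rw [mem_compF]
          refine ⟨by omega, ?_, hposO⟩
          have := (count_decode (evens L) (odds L)).1 (by omega)
          rw [interleave_evens_odds] at this
          rw [this] at hcnt
          omega
        · rw [interleave_evens_odds]
      | false =>
        right
        refine ⟨odds L, evens L, ⟨?_, ?_⟩, ?_⟩
        · rw [mem_compF]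
          refine ⟨by omega, ?_, hposO⟩
          have := (count_decode (evens L) (odds L)).2 (by omega)
          rw [interleave_evens_odds] at this
          rw [this] at hcnt
          omega
        · rw [mem_compF]
          refine ⟨by omega, ?_, hposE⟩
          have := (count_decode (evens L) (odds L)).2 (by omega)
          rw [interleave_evens_odds] at this
          rw [this] at hcnt
          omega
        · rw [interleave_evens_odds]
    · rintro (⟨A, B, ⟨hA, hB⟩, rfl⟩ | ⟨A, B, ⟨hA, hB⟩, rfl⟩)
      · obtain ⟨hA1, hA2, hA3⟩ := mem_compF.mp hA
        obtain ⟨hB1, hB2, hB3⟩ := mem_compF.mp hB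
        have hposI : ∀ a ∈ interleave A B, 1 ≤ a := by
          intro a ha
          rcases mem_interleave ha with h | h
          · exact hA3 a h
          · exact hB3 a h
        refine ⟨?_, ?_, ?_⟩
        · rw [decode_length, interleave_sum]; omega
        · rw [(count_decode A B).1 (by omega)]; exact hA2
        · rw [numRuns_decode _ _ hposI, interleave_length]; omega
      · obtain ⟨hA1, hA2, hA3⟩ := mem_compF.mp hA
        obtain ⟨hB1, hB2, hB3⟩ := mem_compF.mp hB
        have hposI : ∀ a ∈ interleave B A, 1 ≤ a := by
          intro a ha
          rcases mem_interleave ha with h | h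
          · exact hB3 a h
          · exact hA3 a h
        refine ⟨?_, ?_, ?_⟩
        · rw [decode_length, interleave_sum]; omega
        · rw [(count_decode B A).2 (by omega)]; exact hA2
        · rw [numRuns_decode _ _ hposI, interleave_length]; omega
  · -- cardinality
    have hinj₁ : Set.InjOn (fun p : List ℕ × List ℕ => decode true (interleave p.1 p.2))
        ↑((compF w k₁) ×ˢ (compF (n-w) k₂)) := by
      rintro ⟨A, B⟩ hAB ⟨A', B'⟩ hAB' h
      simp only [Finset.coe_product, Set.mem_prod, Finset.mem_coe] at hAB hAB'
      obtain ⟨hA1, _, hA3⟩ := mem_compF.mp hAB.1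
      obtain ⟨hB1, _, hB3⟩ := mem_compF.mp hAB.2
      obtain ⟨hA1', _, hA3'⟩ := mem_compF.mp hAB'.1
      obtain ⟨hB1', _, hB3'⟩ := mem_compF.mp hAB'.2
      have hI : interleave A B = interleave A' B' := by
        apply decode_inj _ _ true
        · intro a ha; rcases mem_interleave ha with h|h
          exacts [hA3 a h, hB3 a h]
        · intro a ha; rcases mem_interleave ha with h|h
          exacts [hA3' a h, hB3' a h]
        · exact h
      have h1 := evens_interleave A B (by omega)
      have h2 := evens_interleave A' B' (by omega)
      have : A = A' := by rw [← h1.1, ← h2.1, hI]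
      have : B = B' := by rw [← h1.2, ← h2.2, hI]
      simp_all
    have hinj₂ : Set.InjOn (fun p : List ℕ × List ℕ => decode false (interleave p.2 p.1))
        ↑((compF w k₂) ×ˢ (compF (n-w) k₁)) := by
      rintro ⟨A, B⟩ hAB ⟨A', B'⟩ hAB' h
      simp only [Finset.coe_product, Set.mem_prod, Finset.mem_coe] at hAB hAB'
      obtain ⟨hA1, _, hA3⟩ := mem_compF.mp hAB.1
      obtain ⟨hB1, _, hB3⟩ := mem_compF.mp hAB.2
      obtain ⟨hA1', _, hA3'⟩ := mem_compF.mp hAB'.1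
      obtain ⟨hB1', _, hB3'⟩ := mem_compF.mp hAB'.2
      have hI : interleave B A = interleave B' A' := by
        apply decode_inj _ _ false
        · intro a ha; rcases mem_interleave ha with h|h
          exacts [hB3 a h, hA3 a h]
        · intro a ha; rcases mem_interleave ha with h|h
          exacts [hB3' a h, hA3' a h]
        · exact h
      have h1 := evens_interleave B A (by omega)
      have h2 := evens_interleave B' A' (by omega)
      have : B = B' := by rw [← h1.1, ← h2.1, hI]
      have : A = A' := by rw [← h1.2, ← h2.2, hI]
      simp_all
    have hhead₁ : ∀ x ∈ F₁, x.head? = some true := by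
      intro x hx
      rw [hF₁, Finset.mem_image] at hx
      obtain ⟨⟨A, B⟩, hAB, rfl⟩ := hx
      rw [Finset.mem_product] at hAB
      obtain ⟨hA1, _, hA3⟩ := mem_compF.mp hAB.1
      cases A with
      | nil => simp at hA1; omega
      | cons a A' =>
        rw [interleave_cons]
        exact decode_head true a _ (hA3 a (by simp))
    have hhead₂ : ∀ x ∈ F₂, x.head? = some false := by
      intro x hx
      rw [hF₂, Finset.mem_image] at hx
      obtain ⟨⟨A, B⟩, hAB, rfl⟩ := hx
      rw [Finset.mem_product] at hAB
      obtain ⟨hB1, _, hB3⟩ := mem_compF.mp hAB.2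
      match B, hB1, hB3 with
      | b :: B', hB1, hB3 =>
        rw [interleave_cons]
        exact decode_head false b _ (hB3 b (by simp))
      | [], hB1, _ => simp at hB1; omega
    have hdisj : Disjoint F₁ F₂ := by
      rw [Finset.disjoint_left]
      intro x hx1 hx2
      have := hhead₁ x hx1
      rw [hhead₂ x hx2] at this
      simp at this
    rw [Finset.card_union_of_disjoint hdisj, hF₁, hF₂,
      Finset.card_image_of_injOn hinj₁, Finset.card_image_of_injOn hinj₂,
      Finset.card_product, Finset.card_product,
      card_compF k₁ w hw hk₁pos, card_compF k₂ (n-w) (by omega) hk₂pos,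
      card_compF k₂ w hw hk₂pos, card_compF k₁ (n-w) (by omega) hk₁pos]

/-- Lemma: counting words in `U_n` and `V_{n-1}` with exactly `i` runs. -/
theorem stmt17 (n : ℕ) (hn : Even n) (h2 : 2 ≤ n) :
    (∀ i : ℕ, 2 ≤ i → i ≤ n →
      {x ∈ balanced n | numRuns x = i}.ncard =
        2 * (n / 2 - 1).choose ((i + 1) / 2 - 1) * (n / 2 - 1).choose (i / 2 - 1)) ∧
    (∀ i : ℕ, 2 ≤ i → i ≤ n - 1 →
      {x ∈ Vset n | numRuns x = i}.ncard =
        2 * ((n / 2 - 1).choose ((i + 1) / 2 - 1) * (n / 2 - 2).choose (i / 2 - 1) +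
             (n / 2 - 1).choose (i / 2 - 1) * (n / 2 - 2).choose ((i + 1) / 2 - 1))) := by

  obtain ⟨r, rfl⟩ : ∃ r, n = 2 * r := by
    obtain ⟨r, hr⟩ := hn; exact ⟨r, by omega⟩
  have hr1 : 1 ≤ r := by omega
  have hdiv : 2 * r / 2 = r := by omega
  constructor
  · intro i hi2 hin
    obtain ⟨F, hFeq, hFcard⟩ := main_count (2*r) r i (by omega) (by omega) hi2
    have hset : {x ∈ balanced (2*r) | numRuns x = i} =
        {x : List Bool | x.length = 2*r ∧ x.count true = r ∧ numRuns x = i} := by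
      ext x
      simp only [balanced, Set.mem_setOf_eq, Set.sep_setOf, hdiv]
      tauto
    rw [hset, hFeq, Set.ncard_coe_finset, hFcard, hdiv]
    have : 2 * r - r - 1 = r - 1 := by omega
    rw [this]
    ring
  · intro i hi2 hin
    have hr2 : 2 ≤ r := by omega
    obtain ⟨F₁, hF₁eq, hF₁card⟩ := main_count (2*r-1) r i (by omega) (by omega) hi2
    obtain ⟨F₂, hF₂eq, hF₂card⟩ := main_count (2*r-1) (r-1) i (by omega) (by omega) hi2
    have hdisj : Disjoint F₁ F₂ := by
      rw [Finset.disjoint_left]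
      intro x hx1 hx2
      have h1 : x ∈ ({x : List Bool | x.length = 2*r-1 ∧ x.count true = r ∧ numRuns x = i}) := by
        rw [hF₁eq]; exact hx1
      have h2 : x ∈ ({x : List Bool | x.length = 2*r-1 ∧ x.count true = r-1 ∧ numRuns x = i}) := by
        rw [hF₂eq]; exact hx2
      simp only [Set.mem_setOf_eq] at h1 h2
      omega
    have hset : {x ∈ Vset (2*r) | numRuns x = i} = ↑(F₁ ∪ F₂) := by
      ext x
      simp only [Vset, Set.mem_setOf_eq, Set.sep_setOf, hdiv, Finset.coe_union,
        Set.mem_union]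
      constructor
      · rintro ⟨⟨hlen, hcnt⟩, hruns⟩
        rcases hcnt with hcnt | hcnt
        · left
          have : x ∈ ({x : List Bool | x.length = 2*r-1 ∧ x.count true = r ∧ numRuns x = i}) :=
            ⟨hlen, hcnt, hruns⟩
          rwa [hF₁eq] at this
        · right
          have : x ∈ ({x : List Bool | x.length = 2*r-1 ∧ x.count true = r-1 ∧ numRuns x = i}) :=
            ⟨hlen, hcnt, hruns⟩
          rwa [hF₂eq] at this
      · rintro (hx | hx)
        · have : x ∈ ({x : List Bool | x.length = 2*r-1 ∧ x.count true = r ∧ numRuns x = i}) := by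
            rw [hF₁eq]; exact hx
          simp only [Set.mem_setOf_eq] at this
          exact ⟨⟨this.1, Or.inl this.2.1⟩, this.2.2⟩
        · have : x ∈ ({x : List Bool | x.length = 2*r-1 ∧ x.count true = r-1 ∧ numRuns x = i}) := by
            rw [hF₂eq]; exact hx
          simp only [Set.mem_setOf_eq] at this
          exact ⟨⟨this.1, Or.inr this.2.1⟩, this.2.2⟩
    rw [hset, Set.ncard_coe_finset, Finset.card_union_of_disjoint hdisj, hF₁card, hF₂card]
    have e1 : 2*r-1 - r - 1 = r - 2 := by omega
    have e2 : 2*r-1 - (r-1) - 1 = r - 1 := by omega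
    have e3 : r - 1 - 1 = r - 2 := by omega
    rw [e1, e2, e3, hdiv]
    ring

end BRC
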